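/- If μ₁ and μ₂ are fuzzy left ideals of a Γ-semiring S (with μ₁(0)=μ₂(0)=1), then their sum μ₁⊕μ₂, defined by (μ₁⊕μ₂)(x) = sup over all decompositions x = u+v of min(μ₁(u), μ₂(v)), is a fuzzy left ideal of S. -/
import Mathlib


open Classical

/-- A Γ-semiring: additive commutative monoids `S` and `G` with a triadditive,
associative product `tmul : S → G → S → S` for which zero is absorbing. -/
class GammaSemiring (S : Type*) (G : Type*) [AddCommMonoid S] [AddCommMonoid G] where
  tmul : S → G → S → S
  add_tmul : ∀ (a b : S) (γ : G) (c : S), tmul (a + b) γ c = tmul a γ c + tmul b γ c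
  tmul_add : ∀ (a : S) (γ : G) (b c : S), tmul a γ (b + c) = tmul a γ b + tmul a γ c
  tmul_gadd : ∀ (a : S) (γ δ : G) (b : S), tmul a (γ + δ) b = tmul a γ b + tmul a δ b
  tmul_assoc : ∀ (a : S) (γ : G) (b : S) (δ : G) (c : S),
      tmul a γ (tmul b δ c) = tmul (tmul a γ b) δ c
  zero_tmul : ∀ (γ : G) (x : S), tmul 0 γ x = 0
  tmul_zero : ∀ (x : S) (γ : G), tmul x γ 0 = 0
  tmul_gzero : ∀ (x y : S), tmul x 0 y = 0

/-- μ is a fuzzy left ideal: `[0,1]`-valued, `μ 0 = 1`, superadditive under `min`,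
and `μ (xγy) ≥ μ y`. -/
def IsFuzzyLeftIdeal (S G : Type*) [AddCommMonoid S] [AddCommMonoid G]
    [GammaSemiring S G] (μ : S → ℝ) : Prop :=
  (∀ x, μ x ∈ Set.Icc (0 : ℝ) 1) ∧ μ 0 = 1 ∧
  (∀ x y, min (μ x) (μ y) ≤ μ (x + y)) ∧
  (∀ (x : S) (γ : G) (y : S), μ y ≤ μ (GammaSemiring.tmul x γ y))

/-- μ is a fuzzy right ideal. -/
def IsFuzzyRightIdeal (S G : Type*) [AddCommMonoid S] [AddCommMonoid G]
    [GammaSemiring S G] (μ : S → ℝ) : Prop :=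
  (∀ x, μ x ∈ Set.Icc (0 : ℝ) 1) ∧ μ 0 = 1 ∧
  (∀ x y, min (μ x) (μ y) ≤ μ (x + y)) ∧
  (∀ (x : S) (γ : G) (y : S), μ x ≤ μ (GammaSemiring.tmul x γ y))

/-- μ is a fuzzy (two-sided) ideal. -/
def IsFuzzyIdeal (S G : Type*) [AddCommMonoid S] [AddCommMonoid G]
    [GammaSemiring S G] (μ : S → ℝ) : Prop :=
  (∀ x, μ x ∈ Set.Icc (0 : ℝ) 1) ∧ μ 0 = 1 ∧
  (∀ x y, min (μ x) (μ y) ≤ μ (x + y)) ∧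
  (∀ (x : S) (γ : G) (y : S), max (μ x) (μ y) ≤ μ (GammaSemiring.tmul x γ y))

/-- The sum `μ ⊕ ν` of fuzzy subsets: `(μ ⊕ ν)(x) = sup { min (μ u) (ν v) : x = u + v }`. -/
noncomputable def fSum {S : Type*} [AddCommMonoid S] (μ ν : S → ℝ) : S → ℝ := fun x =>
  sSup {r : ℝ | ∃ u v : S, x = u + v ∧ r = min (μ u) (ν v)}

/-- The product `μ Γ ν`: `(μ Γ ν)(x) = sup { min (μ u) (ν v) : x = uγv }`
(`sSup ∅ = 0` in `ℝ`, matching the convention that it is `0` with no representation). -/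
noncomputable def fProd (S G : Type*) [AddCommMonoid S] [AddCommMonoid G]
    [GammaSemiring S G] (μ ν : S → ℝ) : S → ℝ := fun x =>
  sSup {r : ℝ | ∃ (u : S) (γ : G) (v : S),
    x = GammaSemiring.tmul u γ v ∧ r = min (μ u) (ν v)}

/-- The composition `μ ∘ ν`:
`(μ ∘ ν)(x) = sup { min_{1 ≤ i ≤ n} min (μ uᵢ) (ν vᵢ) : x = Σᵢ uᵢγᵢvᵢ, n ≥ 1 }`. -/
noncomputable def fComp (S G : Type*) [AddCommMonoid S] [AddCommMonoid G]
    [GammaSemiring S G] (μ ν : S → ℝ) : S → ℝ := fun x =>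
  sSup {r : ℝ | ∃ (n : ℕ) (u v : Fin (n + 1) → S) (γ : Fin (n + 1) → G),
    x = ∑ i, GammaSemiring.tmul (u i) (γ i) (v i) ∧
    r = Finset.univ.inf' Finset.univ_nonempty (fun i => min (μ (u i)) (ν (v i)))}

theorem fSum_isFuzzyLeftIdeal {S G : Type*} [AddCommMonoid S] [AddCommMonoid G]
    [GammaSemiring S G] (μ₁ μ₂ : S → ℝ)
    (h₁ : IsFuzzyLeftIdeal S G μ₁) (h₂ : IsFuzzyLeftIdeal S G μ₂) :
    IsFuzzyLeftIdeal S G (fSum μ₁ μ₂) := by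
  obtain ⟨hb1, hz1, ha1, hl1⟩ := h₁
  obtain ⟨hb2, hz2, ha2, hl2⟩ := h₂
  set T : S → Set ℝ := fun x => {r : ℝ | ∃ u v : S, x = u + v ∧ r = min (μ₁ u) (μ₂ v)}
    with hT
  have hne : ∀ x, (T x).Nonempty := fun x =>
    ⟨min (μ₁ x) (μ₂ 0), x, 0, by simp⟩
  have hbdd : ∀ x, BddAbove (T x) := by
    intro x
    refine ⟨1, ?_⟩
    rintro r ⟨u, v, -, rfl⟩
    exact le_trans (min_le_left _ _) (hb1 u).2
  have hle1 : ∀ x, fSum μ₁ μ₂ x ≤ 1 := by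
    intro x
    apply csSup_le (hne x)
    rintro r ⟨u, v, -, rfl⟩
    exact le_trans (min_le_left _ _) (hb1 u).2
  have hge0 : ∀ x, 0 ≤ fSum μ₁ μ₂ x := by
    intro x
    have h0 : min (μ₁ x) (μ₂ 0) ∈ T x := ⟨x, 0, by simp⟩
    have : (0:ℝ) ≤ min (μ₁ x) (μ₂ 0) := le_min (hb1 x).1 (hb2 0).1
    exact this.trans (le_csSup (hbdd x) h0)
  refine ⟨fun x => ⟨hge0 x, hle1 x⟩, ?_, ?_, ?_⟩
  · -- value at 0
    refine le_antisymm (hle1 0) ?_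
    have h1 : (1:ℝ) ∈ T 0 := ⟨0, 0, by simp [hz1, hz2]⟩
    exact le_csSup (hbdd 0) h1
  · -- superadditivity
    intro x y
    set m := min (fSum μ₁ μ₂ x) (fSum μ₁ μ₂ y) with hm
    refine le_of_forall_pos_le_add ?_
    intro ε hε
    obtain ⟨a, ha, hax⟩ := exists_lt_of_lt_csSup (hne x)
      (show fSum μ₁ μ₂ x - ε < sSup (T x) from by
        have := min_le_left (fSum μ₁ μ₂ x) (fSum μ₁ μ₂ y)
        simp only [fSum]; linarith [hε])
    obtain ⟨b, hb, hby⟩ := exists_lt_of_lt_csSup (hne y)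
      (show fSum μ₁ μ₂ y - ε < sSup (T y) from by
        simp only [fSum]; linarith [hε])
    obtain ⟨u, v, hxuv, rfl⟩ := ha
    obtain ⟨u', v', hyuv, rfl⟩ := hb
    have hmem : min (μ₁ (u + u')) (μ₂ (v + v')) ∈ T (x + y) := by
      refine ⟨u + u', v + v', ?_, rfl⟩
      rw [hxuv, hyuv]; abel
    have hkey : min m ε + (m - ε) ≤ min (μ₁ (u + u')) (μ₂ (v + v')) ∨ True := Or.inr trivial
    have h1 : min (μ₁ u) (μ₁ u') ≤ μ₁ (u + u') := ha1 u u'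
    have h2 : min (μ₂ v) (μ₂ v') ≤ μ₂ (v + v') := ha2 v v'
    have hmx : m - ε ≤ min (μ₁ (u + u')) (μ₂ (v + v')) := by
      have hx1 : m - ε ≤ μ₁ u := by
        have := min_le_left (μ₁ u) (μ₂ v)
        have hmx' : m ≤ fSum μ₁ μ₂ x := min_le_left _ _
        linarith
      have hx2 : m - ε ≤ μ₂ v := by
        have := min_le_right (μ₁ u) (μ₂ v)
        have hmx' : m ≤ fSum μ₁ μ₂ x := min_le_left _ _
        linarith
      have hy1 : m - ε ≤ μ₁ u' := by
        have := min_le_left (μ₁ u') (μ₂ v')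
        have hmy' : m ≤ fSum μ₁ μ₂ y := min_le_right _ _
        linarith
      have hy2 : m - ε ≤ μ₂ v' := by
        have := min_le_right (μ₁ u') (μ₂ v')
        have hmy' : m ≤ fSum μ₁ μ₂ y := min_le_right _ _
        linarith
      exact le_min (le_trans (le_min hx1 hy1) h1) (le_trans (le_min hx2 hy2) h2)
    have : m - ε ≤ fSum μ₁ μ₂ (x + y) := hmx.trans (le_csSup (hbdd (x + y)) hmem)
    linarith
  · -- left ideal property
    intro x γ y
    apply csSup_le (hne y)
    rintro r ⟨u, v, hyuv, rfl⟩
    have hmem : min (μ₁ (GammaSemiring.tmul x γ u)) (μ₂ (GammaSemiring.tmul x γ v)) ∈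
        T (GammaSemiring.tmul x γ y) := by
      exact ⟨_, _, by rw [hyuv, GammaSemiring.tmul_add], rfl⟩
    refine le_trans (le_min ?_ ?_) (le_csSup (hbdd _) hmem)
    · exact le_trans (min_le_left _ _) (hl1 x γ u)
    · exact le_trans (min_le_right _ _) (hl2 x γ v)
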